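/- For every k ≥ 1 there exists a finite set A ⊂ ℕ such that for all 1 ≤ c ≤ k, |cA + cA| > |cA - cA|; i.e., k-generational sum-dominant sets exist for every k. -/
import Mathlib

open Finset Pointwise

/-- `itSum k A` is the k-fold sumset A + A + ⋯ + A (with `itSum 0 A = {0}`). -/
def itSum : ℕ → Finset ℤ → Finset ℤ
  | 0, _ => {0}
  | n+1, A => A + itSum n A

/-- `gDiff s d A = sA - dA`. -/
def gDiff (s d : ℕ) (A : Finset ℤ) : Finset ℤ := itSum s A - itSum d A


/-- The fringe set `{s*d + j : j ≤ s ≤ c}` (as integers), where `d` is a natural parameter. -/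
def SX (d : ℕ) (c : ℕ) : Finset ℤ :=
  ((Finset.range (c+1)).sigma fun s => Finset.range (s+1)).image
    fun p => ((p.1 * d + p.2 : ℕ) : ℤ)

lemma mem_SX {d c : ℕ} {x : ℤ} :
    x ∈ SX d c ↔ ∃ s j : ℕ, s ≤ c ∧ j ≤ s ∧ x = ((s * d + j : ℕ) : ℤ) := by
  simp only [SX, Finset.mem_image, Finset.mem_sigma, Finset.mem_range, Nat.lt_succ_iff]
  constructor
  · rintro ⟨⟨s, j⟩, ⟨hs, hj⟩, rfl⟩
    exact ⟨s, j, hs, hj, rfl⟩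
  · rintro ⟨s, j, hs, hj, rfl⟩
    exact ⟨⟨s, j⟩, ⟨hs, hj⟩, rfl⟩

lemma SX_zero (d : ℕ) : SX d 0 = {0} := by
  ext x
  simp only [mem_SX, Finset.mem_singleton]
  constructor
  · rintro ⟨s, j, hs, hj, rfl⟩
    interval_cases s <;> interval_cases j <;> simp
  · rintro rfl
    exact ⟨0, 0, le_refl _, le_refl _, by simp⟩

lemma zero_mem_SX (d c : ℕ) : (0 : ℤ) ∈ SX d c :=
  mem_SX.2 ⟨0, 0, Nat.zero_le _, le_refl _, by simp⟩

lemma SX_succ (d c : ℕ) :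
    ({0, (d : ℤ), (d : ℤ) + 1} : Finset ℤ) + SX d c = SX d (c+1) := by
  ext x
  simp only [Finset.mem_add, Finset.mem_insert, Finset.mem_singleton, mem_SX]
  constructor
  · rintro ⟨a, ha, b, ⟨s, j, hs, hj, rfl⟩, rfl⟩
    rcases ha with rfl | rfl | rfl
    · exact ⟨s, j, hs.trans (Nat.le_succ _), hj, by push_cast; ring⟩
    · exact ⟨s+1, j, Nat.succ_le_succ hs, hj.trans (Nat.le_succ _), by push_cast; ring⟩
    · exact ⟨s+1, j+1, Nat.succ_le_succ hs, Nat.succ_le_succ hj, by push_cast; ring⟩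
  · rintro ⟨s, j, hs, hj, rfl⟩
    rcases Nat.lt_or_ge s (c+1) with h | h
    · exact ⟨0, Or.inl rfl, _, ⟨s, j, Nat.lt_succ_iff.1 h, hj, rfl⟩, by push_cast; ring⟩
    · have hs' : s = c + 1 := le_antisymm hs h
      subst hs'
      rcases Nat.lt_or_ge j (c+1) with hj' | hj'
      · exact ⟨(d : ℤ), Or.inr (Or.inl rfl), _, ⟨c, j, le_refl _, Nat.lt_succ_iff.1 hj', rfl⟩,
          by push_cast; ring⟩
      · have hj'' : j = c + 1 := le_antisymm hj hj'
        subst hj''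
        exact ⟨(d : ℤ) + 1, Or.inr (Or.inr rfl), _, ⟨c, c, le_refl _, le_refl _, rfl⟩,
          by push_cast; ring⟩

/-- `N c = ∑_{s=0}^{c} (s+1) = (c+1)(c+2)/2`. -/
def Ncard (c : ℕ) : ℕ := ∑ s ∈ Finset.range (c+1), (s+1)

lemma two_Ncard (c : ℕ) : 2 * Ncard c = (c+1) * (c+2) := by
  induction c with
  | zero => rfl
  | succ n ih =>
    rw [Ncard, Finset.sum_range_succ, ← Ncard, Nat.mul_add, ih]
    ring

lemma Ncard_ineq {c : ℕ} (hc : 1 ≤ c) : 2 * Ncard c < Ncard (2*c) + 1 := by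
  have h1 := two_Ncard c
  have h2 := two_Ncard (2*c)
  nlinarith [h1, h2]

lemma card_SX {d c : ℕ} (hc : c < d) : (SX d c).card = Ncard c := by
  rw [SX, Finset.card_image_of_injOn, Finset.card_sigma]
  · simp [Ncard]
  · rintro ⟨s1, j1⟩ h1 ⟨s2, j2⟩ h2 he
    simp only [Finset.mem_coe, Finset.mem_sigma, Finset.mem_range, Nat.lt_succ_iff] at h1 h2
    simp only at he
    have he' : s1 * d + j1 = s2 * d + j2 := by exact_mod_cast he
    have hj1 : j1 < d := lt_of_le_of_lt h1.2 (lt_of_le_of_lt h1.1 hc)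
    have hj2 : j2 < d := lt_of_le_of_lt h2.2 (lt_of_le_of_lt h2.1 hc)
    have hs : s1 = s2 := by
      rcases Nat.lt_trichotomy s1 s2 with h | h | h
      · exfalso; nlinarith [Nat.succ_le_of_lt h]
      · exact h
      · exfalso; nlinarith [Nat.succ_le_of_lt h]
    subst hs
    have : j1 = j2 := by omega
    simp [this]

lemma SX_bounds {d c : ℕ} {x : ℤ} (hx : x ∈ SX d c) : 0 ≤ x ∧ x ≤ (c : ℤ) * d + c := by
  obtain ⟨s, j, hs, hj, rfl⟩ := mem_SX.1 hx
  constructor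
  · positivity
  · push_cast
    have h1 : (s : ℤ) * d ≤ c * d := by
      have : (s : ℤ) ≤ c := by exact_mod_cast hs
      exact mul_le_mul_of_nonneg_right this (by positivity)
    have h2 : (j : ℤ) ≤ c := by exact_mod_cast hj.trans hs
    linarith


/-- Abstract step lemma: adding the base block to the `c`-fold block. -/
lemma blk_add (S S' : Finset ℤ) (d h m t : ℤ)
    (h2 : 2 ≤ h) (hm : 10 * h = m) (ht : m ≤ t)
    (hS : ∀ x ∈ S, 0 ≤ x ∧ x ≤ h - 2) (hS0 : (0:ℤ) ∈ S)
    (hd0 : 0 ≤ d) (hd : d + 1 ≤ h - 2)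
    (hadd : ({0, d, d+1} : Finset ℤ) + S = S') :
    (({0, d, d+1} : Finset ℤ) ∪ Finset.Icc h (m-h) ∪ {m}) + (S ∪ Finset.Icc h (t-h) ∪ {t})
      = S' ∪ Finset.Icc h (m+t-h) ∪ {m+t} := by
  apply Finset.Subset.antisymm
  · intro x hx
    rw [Finset.mem_add] at hx
    obtain ⟨a, ha, b, hb, rfl⟩ := hx
    simp only [Finset.mem_union, Finset.mem_insert, Finset.mem_singleton, Finset.mem_Icc] at ha hb ⊢
    rcases ha with (ha | ha) | ha
    · rcases hb with (hb | hb) | hb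
      · -- X + S = S'
        left; left
        rw [← hadd, Finset.mem_add]
        exact ⟨a, by simp [ha], b, hb, rfl⟩
      · -- X + middle
        have hab : 0 ≤ a ∧ a ≤ h - 2 := by rcases ha with rfl | rfl | rfl <;> constructor <;> linarith
        left; right; constructor <;> linarith [hab.1, hab.2, hb.1, hb.2]
      · -- X + {t}
        subst hb
        have hab : 0 ≤ a ∧ a ≤ h - 2 := by rcases ha with rfl | rfl | rfl <;> constructor <;> linarith
        left; right; constructor <;> linarith [hab.1, hab.2]
    · rcases hb with (hb | hb) | hb
      · have hbb := hS b hb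
        left; right; constructor <;> linarith [hbb.1, hbb.2, ha.1, ha.2]
      · left; right; constructor <;> linarith [ha.1, ha.2, hb.1, hb.2]
      · subst hb; left; right; constructor <;> linarith [ha.1, ha.2]
    · subst ha
      rcases hb with (hb | hb) | hb
      · have hbb := hS b hb
        left; right; constructor <;> linarith [hbb.1, hbb.2]
      · left; right; constructor <;> linarith [hb.1, hb.2]
      · subst hb; right; trivial
  · intro x hx
    simp only [Finset.mem_union, Finset.mem_singleton, Finset.mem_Icc] at hx
    rw [Finset.mem_add]
    rcases hx with (hx | hx) | hx
    · -- S' = X + S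
      rw [← hadd, Finset.mem_add] at hx
      obtain ⟨a, ha, b, hb, rfl⟩ := hx
      exact ⟨a, by simp only [Finset.mem_union]; left; left; exact ha,
             b, by simp only [Finset.mem_union]; left; left; exact hb, rfl⟩
    · -- middle interval
      by_cases h1 : x ≤ t - h
      · refine ⟨0, ?_, x, ?_, by ring⟩
        · simp
        · simp only [Finset.mem_union, Finset.mem_Icc]
          left; right; exact ⟨hx.1, h1⟩
      · by_cases h3 : x ≤ m + t - 2*h
        · by_cases h4 : x ≤ t
          · refine ⟨h, ?_, x - h, ?_, by ring⟩
            · simp only [Finset.mem_union, Finset.mem_Icc]; left; right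
              constructor <;> linarith
            · simp only [Finset.mem_union, Finset.mem_Icc]; left; right
              constructor <;> linarith
          · refine ⟨x - t + h, ?_, t - h, ?_, by ring⟩
            · simp only [Finset.mem_union, Finset.mem_Icc]; left; right
              constructor <;> linarith
            · simp only [Finset.mem_union, Finset.mem_Icc]; left; right
              constructor <;> linarith
        · refine ⟨m, ?_, x - m, ?_, by ring⟩
          · simp only [Finset.mem_union, Finset.mem_singleton]; right; trivial
          · simp only [Finset.mem_union, Finset.mem_Icc]; left; right
            constructor <;> linarith
    · subst hx
      refine ⟨m, ?_, t, ?_, rfl⟩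
      · simp only [Finset.mem_union, Finset.mem_singleton]; right; trivial
      · simp only [Finset.mem_union, Finset.mem_singleton]; right; trivial

/-- Abstract difference lemma. -/
lemma blk_sub (S : Finset ℤ) (h t : ℤ)
    (h2 : 2 ≤ h) (ht : 3*h ≤ t)
    (hS : ∀ x ∈ S, 0 ≤ x ∧ x ≤ h - 2) (hS0 : (0:ℤ) ∈ S) :
    (S ∪ Finset.Icc h (t-h) ∪ {t}) - (S ∪ Finset.Icc h (t-h) ∪ {t})
      = S.image (fun y => y - t) ∪ Finset.Icc (h-t) (t-h) ∪ S.image (fun y => t - y) := by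
  apply Finset.Subset.antisymm
  · intro x hx
    rw [Finset.mem_sub] at hx
    obtain ⟨a, ha, b, hb, rfl⟩ := hx
    simp only [Finset.mem_union, Finset.mem_singleton, Finset.mem_Icc] at ha hb
    simp only [Finset.mem_union, Finset.mem_Icc, Finset.mem_image]
    rcases ha with (ha | ha) | ha
    · rcases hb with (hb | hb) | hb
      · have h1 := hS a ha; have h2' := hS b hb
        left; right; constructor <;> linarith [h1.1, h1.2, h2'.1, h2'.2]
      · have h1 := hS a ha
        left; right; constructor <;> linarith [h1.1, h1.2, hb.1, hb.2]
      · subst hb; left; left; exact ⟨a, ha, rfl⟩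
    · rcases hb with (hb | hb) | hb
      · have h1 := hS b hb
        left; right; constructor <;> linarith [h1.1, h1.2, ha.1, ha.2]
      · left; right; constructor <;> linarith [ha.1, ha.2, hb.1, hb.2]
      · subst hb; left; right; constructor <;> linarith [ha.1, ha.2]
    · subst ha
      rcases hb with (hb | hb) | hb
      · right; exact ⟨b, hb, rfl⟩
      · left; right; constructor <;> linarith [hb.1, hb.2]
      · subst hb; left; right; constructor <;> linarith
  · intro x hx
    simp only [Finset.mem_union, Finset.mem_Icc, Finset.mem_image] at hx
    rw [Finset.mem_sub]
    rcases hx with (hx | hx) | hx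
    · obtain ⟨y, hy, rfl⟩ := hx
      exact ⟨y, by simp only [Finset.mem_union]; left; left; exact hy,
             t, by simp only [Finset.mem_union, Finset.mem_singleton]; right; trivial, rfl⟩
    · by_cases h1 : h ≤ x
      · refine ⟨x, ?_, 0, ?_, by ring⟩
        · simp only [Finset.mem_union, Finset.mem_Icc]; left; right; exact ⟨h1, hx.2⟩
        · simp only [Finset.mem_union]; left; left; exact hS0
      · by_cases h3 : x ≤ -h
        · refine ⟨0, ?_, -x, ?_, by ring⟩
          · simp only [Finset.mem_union]; left; left; exact hS0
          · simp only [Finset.mem_union, Finset.mem_Icc]; left; right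
            constructor <;> linarith [hx.1]
        · by_cases h4 : 0 ≤ x
          · refine ⟨x + h, ?_, h, ?_, by ring⟩
            · simp only [Finset.mem_union, Finset.mem_Icc]; left; right
              constructor <;> linarith
            · simp only [Finset.mem_union, Finset.mem_Icc]; left; right
              constructor <;> linarith
          · refine ⟨h, ?_, h - x, ?_, by ring⟩
            · simp only [Finset.mem_union, Finset.mem_Icc]; left; right
              constructor <;> linarith
            · simp only [Finset.mem_union, Finset.mem_Icc]; left; right
              constructor <;> linarith
    · obtain ⟨y, hy, rfl⟩ := hx
      exact ⟨t, by simp only [Finset.mem_union, Finset.mem_singleton]; right; trivial,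
             y, by simp only [Finset.mem_union]; left; left; exact hy, rfl⟩


lemma blk_card (S : Finset ℤ) (h t : ℤ)
    (h2 : 2 ≤ h) (ht : 3*h ≤ t)
    (hS : ∀ x ∈ S, 0 ≤ x ∧ x ≤ h - 2) :
    (S ∪ Finset.Icc h (t-h) ∪ {t}).card = S.card + (t - 2*h + 1).toNat + 1 := by
  have d1 : Disjoint S (Finset.Icc h (t-h)) := by
    rw [Finset.disjoint_left]
    intro x hx hx'
    have := hS x hx
    simp only [Finset.mem_Icc] at hx'
    linarith [this.2, hx'.1]
  have d2 : Disjoint (S ∪ Finset.Icc h (t-h)) ({t} : Finset ℤ) := by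
    rw [Finset.disjoint_left]
    intro x hx hx'
    simp only [Finset.mem_singleton] at hx'
    simp only [Finset.mem_union, Finset.mem_Icc] at hx
    rcases hx with hx | hx
    · linarith [(hS x hx).2, hx'.ge, hx'.le]
    · linarith [hx.2, hx'.ge, hx'.le]
  rw [Finset.card_union_of_disjoint d2, Finset.card_union_of_disjoint d1,
    Int.card_Icc, Finset.card_singleton]
  congr 2
  ring

lemma diff_card (S : Finset ℤ) (h t : ℤ)
    (h2 : 2 ≤ h) (ht : 3*h ≤ t)
    (hS : ∀ x ∈ S, 0 ≤ x ∧ x ≤ h - 2) :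
    (S.image (fun y => y - t) ∪ Finset.Icc (h-t) (t-h) ∪ S.image (fun y => t - y)).card
      = S.card + (2*t - 2*h + 1).toNat + S.card := by
  have d1 : Disjoint (S.image (fun y => y - t)) (Finset.Icc (h-t) (t-h)) := by
    rw [Finset.disjoint_left]
    intro x hx hx'
    simp only [Finset.mem_image] at hx
    obtain ⟨y, hy, rfl⟩ := hx
    simp only [Finset.mem_Icc] at hx'
    linarith [(hS y hy).2, hx'.1]
  have d2 : Disjoint (S.image (fun y => y - t) ∪ Finset.Icc (h-t) (t-h))
      (S.image (fun y => t - y)) := by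
    rw [Finset.disjoint_left]
    intro x hx hx'
    simp only [Finset.mem_image] at hx'
    obtain ⟨y, hy, rfl⟩ := hx'
    have hy' := hS y hy
    simp only [Finset.mem_union, Finset.mem_Icc, Finset.mem_image] at hx
    rcases hx with ⟨z, hz, he⟩ | hx
    · have hz' := hS z hz
      linarith [hy'.1, hy'.2, hz'.1, hz'.2]
    · linarith [hx.2, hy'.2]
  rw [Finset.card_union_of_disjoint d2, Finset.card_union_of_disjoint d1,
    Int.card_Icc, Finset.card_image_of_injective _ sub_left_injective,
    Finset.card_image_of_injective _ sub_right_injective]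
  congr 2
  ring

theorem stmt_15 (k : ℕ) (hk : 1 ≤ k) :
    ∃ A : Finset ℤ, A.Nonempty ∧ (∀ a ∈ A, 0 ≤ a) ∧
      ∀ c : ℕ, 1 ≤ c → c ≤ k →
        (itSum (2 * c) A).card > (gDiff c c A).card := by
  set d : ℕ := 2*k+1 with hd_def
  set hh : ℤ := ((4*k^2+4*k+2 : ℕ) : ℤ) with hh_def
  set m : ℤ := 10 * hh with hm_def
  have h2 : (2:ℤ) ≤ hh := by
    rw [hh_def]; push_cast; nlinarith [sq_nonneg (k:ℤ)]
  have hkz : (1:ℤ) ≤ (k:ℤ) := by exact_mod_cast hk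
  have hdh : (d:ℤ) + 1 ≤ hh - 2 := by
    rw [hh_def, hd_def]; push_cast; nlinarith [hkz]
  have hm0 : (0:ℤ) ≤ m := by rw [hm_def]; linarith
  set A : Finset ℤ := ({0, (d:ℤ), (d:ℤ)+1} : Finset ℤ) ∪ Finset.Icc hh (m-hh) ∪ {m}
    with hA_def
  -- bounds on SX pieces
  have hSb : ∀ c : ℕ, c ≤ 2*k → ∀ x ∈ SX d c, 0 ≤ x ∧ x ≤ hh - 2 := by
    intro c hc x hx
    obtain ⟨h0, h1⟩ := SX_bounds hx
    refine ⟨h0, ?_⟩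
    have hcz : (c:ℤ) ≤ 2*k := by exact_mod_cast hc
    have hcz0 : (0:ℤ) ≤ (c:ℤ) := by positivity
    have hdz : (d:ℤ) = 2*(k:ℤ)+1 := by rw [hd_def]; push_cast; ring
    rw [hh_def]
    push_cast
    nlinarith [h1, hcz, hcz0, hdz]
  -- characterization of iterated sumsets
  have char : ∀ c : ℕ, 1 ≤ c → c ≤ 2*k →
      itSum c A = SX d c ∪ Finset.Icc hh ((c:ℤ)*m - hh) ∪ {(c:ℤ)*m} := by
    intro c hc
    induction c, hc using Nat.le_induction with
    | base =>
      intro _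
      have e0 : itSum 1 A = A := by
        show A + itSum 0 A = A
        show A + ({0} : Finset ℤ) = A
        rw [Finset.add_singleton]
        simp
      rw [e0]
      have e1 : SX d 1 = ({0, (d:ℤ), (d:ℤ)+1} : Finset ℤ) := by
        rw [← SX_succ d 0, SX_zero, Finset.add_singleton]
        simp
      rw [hA_def, e1]
      norm_num
    | succ c hc ih =>
      intro hc2
      have ihh := ih (by omega)
      show A + itSum c A = _
      rw [ihh, hA_def]
      have hcz : (1:ℤ) ≤ (c:ℤ) := by exact_mod_cast hc
      have ht : m ≤ (c:ℤ)*m := by nlinarith [hm0, hcz]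
      rw [blk_add (SX d c) (SX d (c+1)) (d:ℤ) hh m ((c:ℤ)*m) h2 rfl ht
        (hSb c (by omega)) (zero_mem_SX d c) (by positivity) hdh (SX_succ d c)]
      congr 2
      · congr 1
        push_cast; ring
      · push_cast; ring
  refine ⟨A, ⟨0, ?_⟩, ?_, ?_⟩
  · rw [hA_def]; simp
  · intro a ha
    rw [hA_def] at ha
    simp only [Finset.mem_union, Finset.mem_insert, Finset.mem_singleton, Finset.mem_Icc] at ha
    rcases ha with (ha | ha) | ha
    · rcases ha with rfl | rfl | rfl
      · exact le_refl 0
      · exact Int.natCast_nonneg d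
      · linarith [Int.natCast_nonneg d]
    · linarith [ha.1, h2]
    · rw [ha]; linarith [hm0, h2]
  · intro c hc1 hck
    have hcz : (1:ℤ) ≤ (c:ℤ) := by exact_mod_cast hc1
    have ht1 : 3*hh ≤ (c:ℤ)*m := by nlinarith [hm0, hcz, h2]
    have ht2 : 3*hh ≤ ((2*c:ℕ):ℤ)*m := by push_cast; nlinarith [hm0, hcz, h2]
    have e2 := char (2*c) (by omega) (by omega)
    have e1 := char c (by omega) (by omega)
    have hsum : (itSum (2*c) A).card = Ncard (2*c) + (((2*c:ℕ):ℤ)*m - 2*hh + 1).toNat + 1 := by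
      rw [e2, blk_card _ _ _ h2 ht2 (hSb (2*c) (by omega)), card_SX (by omega)]
    have hdiff : (gDiff c c A).card = Ncard c + (2*((c:ℤ)*m) - 2*hh + 1).toNat + Ncard c := by
      rw [gDiff, e1, blk_sub _ _ _ h2 ht1 (hSb c (by omega)) (zero_mem_SX d c),
        diff_card _ _ _ h2 ht1 (hSb c (by omega)), card_SX (by omega)]
    rw [hsum, hdiff]
    have hM : (((2*c:ℕ):ℤ)*m - 2*hh + 1).toNat = (2*((c:ℤ)*m) - 2*hh + 1).toNat := by
      congr 1
      push_cast
      ring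
    rw [hM]
    have := Ncard_ineq hc1
    omega
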